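/- Let A be a serial finite length abelian category, let S be a class of indecomposable objects of A, and let M be an indecomposable object of A. If there exists an epimorphism X₁ ⊞ ⋯ ⊞ X_m → M for some finite list of objects X₁, …, X_m of S, then there exists an epimorphism X → M for a single object X of S. (In other words, the indecomposable objects of Gen(add S) coincide with the indecomposable objects of Gen S.) -/

import Mathlib

open CategoryTheory CategoryTheory.Limits

universe v u

attribute [local instance] CategoryTheory.Abelian.hasFiniteBiproducts

variable {A : Type u} [Category.{v} A] [Abelian A]

/-- An object is uniserial if its subobjects are totally ordered by inclusion. -/
def Uniserial (U : A) : Prop :=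
  ∀ P Q : Subobject U, P ≤ Q ∨ Q ≤ P

/-- A category is serial if every object is isomorphic to a finite biproduct of
uniserial objects. -/
def IsSerial (A : Type u) [Category.{v} A] [Abelian A] : Prop :=
  ∀ X : A, ∃ (m : ℕ) (Y : Fin m → A),
    (∀ i, Uniserial (Y i)) ∧ Nonempty (X ≅ ⨁ Y)

/-- An object is indecomposable if it is nonzero and in any decomposition as a
biproduct one of the summands is zero. -/
def Indec (X : A) : Prop :=
  ¬ IsZero X ∧ ∀ B C : A, Nonempty (X ≅ B ⊞ C) → IsZero B ∨ IsZero C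

/-- A biproduct over `Fin (n+1)` splits off its first summand. -/
noncomputable def biproductFinSuccIso {n : ℕ} (Y : Fin (n + 1) → A) :
    (⨁ Y) ≅ Y 0 ⊞ ⨁ (fun i : Fin n => Y i.succ) where
  hom := biprod.lift (biproduct.π Y 0) (biproduct.lift fun i => biproduct.π Y i.succ)
  inv := biprod.desc (biproduct.ι Y 0) (biproduct.desc fun i => biproduct.ι Y i.succ)
  hom_inv_id := by
    rw [biprod.lift_desc, biproduct.lift_desc, ← biproduct.total, Fin.sum_univ_succ]
  inv_hom_id := by
    apply biprod.hom_ext'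
    · apply biprod.hom_ext
      · simp
      · apply biproduct.hom_ext
        intro k
        simp [biproduct.ι_π_ne _ (Fin.succ_ne_zero k).symm]
    · apply biprod.hom_ext
      · apply biproduct.hom_ext'
        intro j
        simp [biproduct.ι_π_ne _ (Fin.succ_ne_zero j)]
      · apply biproduct.hom_ext'
        intro j
        apply biproduct.hom_ext
        intro k
        by_cases h : j = k
        · subst h; simp
        · simp [biproduct.ι_π_ne _ ((Fin.succ_injective n).ne h),
            biproduct.ι_π_ne _ h]

omit [Abelian A] in
theorem uniserial_of_iso {X U : A} (e : X ≅ U) (hU : Uniserial U) : Uniserial X := by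
  intro P Q
  rcases hU (Subobject.mapIsoToOrderIso e P) (Subobject.mapIsoToOrderIso e Q) with h | h
  · exact Or.inl ((Subobject.mapIsoToOrderIso e).le_iff_le.mp h)
  · exact Or.inr ((Subobject.mapIsoToOrderIso e).le_iff_le.mp h)

/-- An indecomposable object isomorphic to a finite biproduct of uniserial objects
is itself uniserial. -/
theorem uniserial_of_indec_biproduct :
    ∀ (n : ℕ) (Y : Fin n → A), (∀ i, Uniserial (Y i)) →
      ∀ X : A, Indec X → (X ≅ ⨁ Y) → Uniserial X := by
  intro n
  induction n with
  | zero =>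
    intro Y _ X hX e
    exfalso
    apply hX.1
    apply IsZero.of_iso _ e
    rw [IsZero.iff_id_eq_zero]
    apply biproduct.hom_ext
    exact fun j => j.elim0
  | succ n ih =>
    intro Y hY X hX e
    have e2 := e ≪≫ biproductFinSuccIso Y
    rcases hX.2 _ _ ⟨e2⟩ with h0 | h1
    · exact ih _ (fun i => hY i.succ) X hX (e2 ≪≫ (isoZeroBiprod h0).symm)
    · exact uniserial_of_iso (e2 ≪≫ (isoBiprodZero h1).symm) (hY 0)

/-- A pairwise-comparable finite nonempty family in a preorder has a greatest element. -/
theorem exists_top_of_pairwise_le {α : Type*} [Preorder α] :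
    ∀ (n : ℕ) (P : Fin (n + 1) → α), (∀ i j, P i ≤ P j ∨ P j ≤ P i) →
      ∃ i0, ∀ i, P i ≤ P i0 := by
  intro n
  induction n with
  | zero => exact fun P _ => ⟨0, fun i => by fin_cases i; exact le_refl _⟩
  | succ n ih =>
    intro P hP
    obtain ⟨j, hj⟩ := ih (fun i => P i.castSucc) (fun i j => hP _ _)
    rcases hP (Fin.last _) j.castSucc with h | h
    · exact ⟨j.castSucc, fun i => by
        induction i using Fin.lastCases with
        | last => exact h
        | cast i => exact hj i⟩
    · exact ⟨Fin.last _, fun i => by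
        induction i using Fin.lastCases with
        | last => exact le_refl _
        | cast i => exact (hj i).trans h⟩

theorem indec_gen_add_eq_gen
    -- `A` is a serial finite length abelian category
    [∀ X : A, IsArtinianObject X] [∀ X : A, IsNoetherianObject X]
    (hser : IsSerial A)
    (S : Set A) (hS : ∀ X ∈ S, Indec X) (M : A) (hM : Indec M)
    (h : ∃ (m : ℕ) (Xs : Fin m → A), (∀ i, Xs i ∈ S) ∧
      ∃ g : ⨁ Xs ⟶ M, Epi g) :
    ∃ X ∈ S, ∃ g : X ⟶ M, Epi g := by
  obtain ⟨m, Xs, hXs, g, hg⟩ := h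
  -- `M` is uniserial
  obtain ⟨k, Y, hY, ⟨e⟩⟩ := hser M
  have hMu : Uniserial M := uniserial_of_indec_biproduct k Y hY M hM e
  rcases m with _ | n
  · -- an epimorphism from the zero object would make `M` zero
    exfalso
    apply hM.1
    rw [IsZero.iff_id_eq_zero]
    have : g = 0 := by
      apply (IsZero.eq_of_src _ g 0)
      rw [IsZero.iff_id_eq_zero]
      apply biproduct.hom_ext
      exact fun j => j.elim0
    rw [← cancel_epi g, this, zero_comp, comp_zero]
  · -- pick the component with the largest image
    set f : ∀ i : Fin (n + 1), Xs i ⟶ M := fun i => biproduct.ι Xs i ≫ g with hf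
    obtain ⟨i0, hi0⟩ := exists_top_of_pairwise_le n
      (fun i => imageSubobject (f i)) (fun i j => hMu _ _)
    let h' : ⨁ Xs ⟶ ((imageSubobject (f i0)) : A) :=
      biproduct.desc fun i => factorThruImageSubobject (f i) ≫ Subobject.ofLE _ _ (hi0 i)
    have hfac : h' ≫ (imageSubobject (f i0)).arrow = g := by
      apply biproduct.hom_ext'
      intro j
      simp [h', hf]
    have he : Epi ((imageSubobject (f i0)).arrow) := by
      rw [← hfac] at hg
      exact epi_of_epi h' _
    have : IsIso ((imageSubobject (f i0)).arrow) := isIso_of_mono_of_epi _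
    have : Epi (f i0) := by
      rw [← imageSubobject_arrow_comp (f i0)]
      exact epi_comp _ _
    exact ⟨Xs i0, hXs i0, f i0, this⟩
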